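/- For all real x > 0, y > 0, z > 1, the function ρ(x,y,z) = x^z ∫_0^{z-1} ( y(z-1)²/(2x) )^t / Γ(t+1) dt is partially differentiable in x and in y, and satisfies the Euler relation x·(∂ρ/∂x)(x,y,z) + y·(∂ρ/∂y)(x,y,z) = z·ρ(x,y,z). -/

import Mathlib

open Real MeasureTheory intervalIntegral Metric

noncomputable def Efun (x z : ℝ) : ℝ :=
  ∫ t in (0 : ℝ)..z, x ^ t / Real.Gamma (t + 1)

noncomputable def rho (x y z : ℝ) : ℝ :=
  x ^ z * Efun (y * (z - 1) ^ 2 / (2 * x)) (z - 1)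

lemma gamma_contOn (w : ℝ) : ContinuousOn (fun t : ℝ => Real.Gamma (t + 1)) (Set.Icc 0 w) := by
  intro t ht
  have hg : ContinuousAt Real.Gamma (t + 1) := by
    refine (Real.differentiableAt_Gamma fun m => ?_).continuousAt
    have h0 : (0:ℝ) < t + 1 := by linarith [ht.1]
    intro h; rw [h] at h0; linarith [Nat.cast_nonneg (α := ℝ) m]
  have : ContinuousAt (fun s : ℝ => Real.Gamma (s + 1)) t :=
    hg.comp (f := fun s : ℝ => s + 1) ((continuous_id.add continuous_const).continuousAt)
  exact this.continuousWithinAt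

lemma gamma_ne (w : ℝ) : ∀ t ∈ Set.Icc (0:ℝ) w, Real.Gamma (t + 1) ≠ 0 :=
  fun t ht => (Real.Gamma_pos_of_pos (by linarith [ht.1])).ne'

lemma contOn_aux {x : ℝ} (hx : 0 < x) (w : ℝ) :
    ContinuousOn (fun t : ℝ => x ^ t / Real.Gamma (t + 1)) (Set.Icc 0 w) := by
  have h1 : Continuous fun t : ℝ => x ^ t := by
    have : (fun t : ℝ => x ^ t) = fun t : ℝ => Real.exp (Real.log x * t) := by
      funext t; rw [Real.rpow_def_of_pos hx]
    rw [this]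
    exact Real.continuous_exp.comp (continuous_const.mul continuous_id)
  exact h1.continuousOn.div (gamma_contOn w) (gamma_ne w)

lemma Efun_hasDerivAt {w a : ℝ} (hw : 0 < w) (ha : 0 < a) :
    HasDerivAt (fun b => Efun b w)
      (∫ t in (0:ℝ)..w, t * a ^ (t - 1) / Real.Gamma (t + 1)) a := by
  have huIoc : Set.uIoc (0:ℝ) w = Set.Ioc 0 w := Set.uIoc_of_le hw.le
  have hsub : Set.Ioc (0:ℝ) w ⊆ Set.Icc 0 w := Set.Ioc_subset_Icc_self
  have hball : ∀ b ∈ ball a (a/2), a/2 < b ∧ b < 2*a := by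
    intro b hb
    rw [mem_ball, Real.dist_eq, abs_lt] at hb
    constructor <;> linarith [hb.1, hb.2]
  set bound : ℝ → ℝ := fun t =>
    w * ((a/2) ^ (t-1) + (2*a) ^ (t-1)) / Real.Gamma (t + 1) with hbdef
  have key := intervalIntegral.hasDerivAt_integral_of_dominated_loc_of_deriv_le
    (F := fun b t => b ^ t / Real.Gamma (t + 1))
    (F' := fun b t => t * b ^ (t - 1) / Real.Gamma (t + 1))
    (x₀ := a) (a := (0:ℝ)) (b := w) (bound := bound) (μ := volume)
    (s := ball a (a/2)) (Metric.ball_mem_nhds a (by positivity))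
    ?_ ?_ ?_ ?_ ?_ ?_
  · exact key.2
  · -- measurability of F near a
    filter_upwards [Metric.ball_mem_nhds a (by positivity : (0:ℝ) < a/2)] with b hb
    have hbpos : 0 < b := by linarith [(hball b hb).1, ha]
    exact ((contOn_aux hbpos w).mono (huIoc ▸ hsub)).aestronglyMeasurable
      (huIoc ▸ measurableSet_Ioc)
  · -- integrability of F a
    exact ((contOn_aux ha w).mono (by rw [Set.uIcc_of_le hw.le])).intervalIntegrable
  · -- measurability of F' a
    have : ContinuousOn (fun t => t * a ^ (t - 1) / Real.Gamma (t + 1)) (Set.Icc 0 w) := by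
      have h1 : Continuous fun t : ℝ => a ^ (t - 1) := by
        have : (fun t : ℝ => a ^ (t-1)) = fun t : ℝ => Real.exp (Real.log a * (t-1)) := by
          funext t; rw [Real.rpow_def_of_pos ha]
        rw [this]
        exact Real.continuous_exp.comp (continuous_const.mul (continuous_id.sub continuous_const))
      exact (continuous_id.mul h1).continuousOn.div (gamma_contOn w) (gamma_ne w)
    exact (this.mono (huIoc ▸ hsub)).aestronglyMeasurable (huIoc ▸ measurableSet_Ioc)
  · -- bound
    refine Filter.Eventually.of_forall fun t ht b hb => ?_
    rw [huIoc] at ht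
    obtain ⟨hb1, hb2⟩ := hball b hb
    have hbpos : 0 < b := by linarith
    have hG : 0 < Real.Gamma (t + 1) := Real.Gamma_pos_of_pos (by linarith [ht.1])
    rw [hbdef]
    rw [Real.norm_eq_abs, abs_div, abs_of_pos hG, div_le_div_iff_of_pos_right hG,
      abs_mul, abs_of_pos ht.1, abs_of_pos (Real.rpow_pos_of_pos hbpos _)]
    have hbp : b ^ (t-1) ≤ (a/2) ^ (t-1) + (2*a) ^ (t-1) := by
      rcases le_or_gt 0 (t-1) with h | h
      · have := Real.rpow_le_rpow hbpos.le hb2.le h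
        have := (Real.rpow_pos_of_pos (by positivity : (0:ℝ) < a/2) (t-1)).le
        linarith
      · have := Real.rpow_le_rpow_of_nonpos (by positivity) hb1.le h.le
        have := (Real.rpow_pos_of_pos (by positivity : (0:ℝ) < 2*a) (t-1)).le
        linarith
    have hbp' : 0 ≤ b ^ (t-1) := (Real.rpow_pos_of_pos hbpos _).le
    have := mul_le_mul ht.2 hbp hbp' hw.le
    linarith
  · -- bound integrable
    apply ContinuousOn.intervalIntegrable
    rw [Set.uIcc_of_le hw.le]
    have h1 : Continuous fun t : ℝ => w * ((a/2) ^ (t-1) + (2*a) ^ (t-1)) := by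
      have e1 : (fun t : ℝ => (a/2) ^ (t-1)) = fun t : ℝ => Real.exp (Real.log (a/2) * (t-1)) := by
        funext t; rw [Real.rpow_def_of_pos (by positivity)]
      have e2 : (fun t : ℝ => (2*a) ^ (t-1)) = fun t : ℝ => Real.exp (Real.log (2*a) * (t-1)) := by
        funext t; rw [Real.rpow_def_of_pos (by positivity)]
      exact continuous_const.mul (((e1 ▸ Real.continuous_exp.comp
        (continuous_const.mul (continuous_id.sub continuous_const))) : Continuous fun t : ℝ => (a/2) ^ (t-1)).add
        ((e2 ▸ Real.continuous_exp.comp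
        (continuous_const.mul (continuous_id.sub continuous_const))) : Continuous fun t : ℝ => (2*a) ^ (t-1)))
    exact h1.continuousOn.div (gamma_contOn w) (gamma_ne w)
  · -- differentiability
    refine Filter.Eventually.of_forall fun t ht b hb => ?_
    have hbpos : 0 < b := by linarith [(hball b hb).1, ha]
    exact (Real.hasDerivAt_rpow_const (Or.inl hbpos.ne')).div_const _

/-- For `x > 0`, `y > 0`, `z > 1`, `ρ` is partially differentiable in `x` and in `y`,
and satisfies the Euler relation `x ∂ρ/∂x + y ∂ρ/∂y = z ρ`. -/
theorem rho_euler_relation (x y z : ℝ) (hx : 0 < x) (hy : 0 < y) (hz : 1 < z) :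
    DifferentiableAt ℝ (fun u : ℝ => rho u y z) x ∧
    DifferentiableAt ℝ (fun v : ℝ => rho x v z) y ∧
    x * deriv (fun u : ℝ => rho u y z) x + y * deriv (fun v : ℝ => rho x v z) y =
      z * rho x y z := by
  have hw : 0 < z - 1 := by linarith
  set a : ℝ := y * (z - 1) ^ 2 / (2 * x) with hadef
  have ha : 0 < a := by positivity
  set D : ℝ := ∫ t in (0:ℝ)..(z-1), t * a ^ (t - 1) / Real.Gamma (t + 1) with hDdef
  have hE : HasDerivAt (fun b => Efun b (z - 1)) D a := Efun_hasDerivAt hw ha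
  -- derivative in x
  have hinnerx : HasDerivAt (fun u : ℝ => y * (z - 1) ^ 2 / (2 * u))
      ((0 * (2 * x) - y * (z - 1) ^ 2 * 2) / (2 * x) ^ 2) x := by
    exact (hasDerivAt_const x (y * (z-1)^2)).div
      (by simpa using (hasDerivAt_id x).const_mul 2) (by positivity)
  have hpow : HasDerivAt (fun u : ℝ => u ^ z) (z * x ^ (z - 1)) x := by
    simpa using Real.hasDerivAt_rpow_const (p := z) (Or.inl hx.ne')
  have hx' : HasDerivAt (fun u : ℝ => rho u y z)
      (z * x ^ (z - 1) * Efun a (z - 1) +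
        x ^ z * (D * ((0 * (2 * x) - y * (z - 1) ^ 2 * 2) / (2 * x) ^ 2))) x := by
    have := hpow.mul ((hE.comp x hinnerx))
    simpa [rho, hadef, mul_comm, Pi.mul_def, Function.comp_def] using this
  -- derivative in y
  have hinnery : HasDerivAt (fun v : ℝ => v * (z - 1) ^ 2 / (2 * x))
      ((z - 1) ^ 2 / (2 * x)) y := by
    simpa using ((hasDerivAt_id y).mul_const ((z-1)^2)).div_const (2 * x)
  have hy' : HasDerivAt (fun v : ℝ => rho x v z)
      (x ^ z * (D * ((z - 1) ^ 2 / (2 * x)))) y := by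
    have := ((hE.comp y hinnery)).const_mul (x ^ z)
    simpa [rho, hadef, mul_comm, mul_assoc] using this
  refine ⟨hx'.differentiableAt, hy'.differentiableAt, ?_⟩
  rw [hx'.deriv, hy'.deriv, rho, ← hadef]
  have hxz : x * x ^ (z - 1) = x ^ z := by
    have h := (Real.rpow_add hx 1 (z - 1)).symm
    rw [Real.rpow_one, show (1:ℝ) + (z - 1) = z by ring] at h
    exact h
  have hxz' : x ^ z ≠ 0 := (Real.rpow_pos_of_pos hx z).ne'
  field_simp
  ring_nf
  rw [← hxz]
  ring
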